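/- Fix 0 < γ < 1/2 < λ < 1 and set t₀ = (1-2λ)/(1-2γ) < 0. Let φ₁(x,y) = (λx, γy) and φ₂(x,y) = (λx + 1 - λ, γy + 1 - γ), and let Z ⊂ [0,1]² be the attractor of (φ₁, φ₂). Define P_t(x,y) = x - t y. Then for every t with t₀ < t ≤ 0, P_t(Z) = [0, 1 - t]. -/
import Mathlib


open Set

/-- For `0 < γ < 1/2 < λ < 1` and the attractor `Z` of
`φ₁(x,y) = (λx, γy)`, `φ₂(x,y) = (λx + 1 - λ, γy + 1 - γ)`, the projection
`P_t(x,y) = x - t y` maps `Z` onto `[0, 1 - t]` for every `(1-2λ)/(1-2γ) < t ≤ 0`. -/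
theorem stmt_10 (γ lam : ℝ) (h1 : 0 < γ) (h2 : γ < 1 / 2) (h3 : 1 / 2 < lam) (h4 : lam < 1)
    (φ₁ φ₂ : ℝ × ℝ → ℝ × ℝ)
    (hφ₁ : ∀ q, φ₁ q = (lam * q.1, γ * q.2))
    (hφ₂ : ∀ q, φ₂ q = (lam * q.1 + 1 - lam, γ * q.2 + 1 - γ))
    (Z : Set (ℝ × ℝ)) (hZc : IsCompact Z) (hZne : Z.Nonempty)
    (hZ : Z = φ₁ '' Z ∪ φ₂ '' Z) (hZsub : Z ⊆ Set.Icc ((0 : ℝ), (0 : ℝ)) (1, 1)) :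
    ∀ t : ℝ, (1 - 2 * lam) / (1 - 2 * γ) < t → t ≤ 0 →
      (fun q : ℝ × ℝ => q.1 - t * q.2) '' Z = Set.Icc 0 (1 - t) := by
  intro t ht0 ht
  have hgl : γ < lam := lt_trans h2 h3
  have hlam0 : (0:ℝ) < lam := lt_trans h1 hgl
  have h1Z : ∀ w ∈ Z, φ₁ w ∈ Z := by
    intro w hw; rw [hZ]; exact Or.inl ⟨w, hw, rfl⟩
  have h2Z : ∀ w ∈ Z, φ₂ w ∈ Z := by
    intro w hw; rw [hZ]; exact Or.inr ⟨w, hw, rfl⟩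
  -- Z ⊆ unit square, coordinatewise
  have hsq : ∀ z ∈ Z, 0 ≤ z.1 ∧ z.1 ≤ 1 ∧ 0 ≤ z.2 ∧ z.2 ≤ 1 := by
    intro z hz
    have h := hZsub hz
    rw [Set.mem_Icc, Prod.le_def, Prod.le_def] at h
    exact ⟨h.1.1, h.2.1, h.1.2, h.2.2⟩
  -- covering inequality
  have hcov : ∀ n : ℕ, lam ^ n * (1 - 2 * lam) ≤ t * (γ ^ n * (1 - 2 * γ)) := by
    intro n
    have hγ2 : (0:ℝ) < 1 - 2 * γ := by linarith
    have h12 : 1 - 2 * lam < t * (1 - 2 * γ) := by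
      rw [div_lt_iff₀ hγ2] at ht0; linarith [ht0]
    have hgp : (0:ℝ) < γ ^ n := pow_pos h1 n
    have hglel : γ ^ n ≤ lam ^ n := pow_le_pow_left₀ (le_of_lt h1) (le_of_lt hgl) n
    nlinarith [hgp, hglel, h12]
  -- key construction by induction
  have key : ∀ s : ℝ, 0 ≤ s → s ≤ 1 - t → ∀ n : ℕ, ∃ c : ℝ, ∃ g : ℝ × ℝ → ℝ × ℝ,
      0 ≤ c ∧ (∀ w ∈ Z, g w ∈ Z) ∧
      (∀ w : ℝ × ℝ, (g w).1 - t * (g w).2 = lam ^ n * w.1 - t * (γ ^ n * w.2) + c) ∧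
      c ≤ s ∧ s ≤ c + (lam ^ n - t * γ ^ n) := by
    intro s hs0 hs1 n
    induction n with
    | zero =>
      exact ⟨0, id, le_refl 0, fun w hw => hw, by intro w; simp, hs0, by simpa using hs1⟩
    | succ n ih =>
      obtain ⟨c, g, hc0, hgZ, hgP, hcs, hsc⟩ := ih
      have hgp : (0:ℝ) < γ ^ n := pow_pos h1 n
      have hlp : (0:ℝ) < lam ^ n := pow_pos hlam0 n
      by_cases hcase : s ≤ c + (lam ^ (n + 1) - t * γ ^ (n + 1))
      · refine ⟨c, g ∘ φ₁, hc0, fun w hw => hgZ _ (h1Z w hw), ?_, hcs, hcase⟩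
        intro w
        simp only [Function.comp_apply, hφ₁ w, hgP]
        ring
      · push_neg at hcase
        have hc' : c + (lam ^ n * (1 - lam) - t * (γ ^ n * (1 - γ)))
            ≤ c + (lam ^ (n + 1) - t * γ ^ (n + 1)) := by
          have := hcov n
          have e1 : lam ^ (n+1) = lam ^ n * lam := pow_succ lam n
          have e2 : γ ^ (n+1) = γ ^ n * γ := pow_succ γ n
          nlinarith [this]
        refine ⟨c + (lam ^ n * (1 - lam) - t * (γ ^ n * (1 - γ))), g ∘ φ₂, ?_,
          fun w hw => hgZ _ (h2Z w hw), ?_, ?_, ?_⟩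
        · have ha : 0 ≤ lam ^ n * (1 - lam) := mul_nonneg hlp.le (by linarith)
          have hb : t * (γ ^ n * (1 - γ)) ≤ 0 :=
            mul_nonpos_of_nonpos_of_nonneg ht (mul_nonneg hgp.le (by linarith))
          linarith
        · intro w
          simp only [Function.comp_apply, hφ₂ w, hgP]
          ring
        · exact le_of_lt (lt_of_le_of_lt hc' hcase)
        · have e : c + (lam ^ n * (1 - lam) - t * (γ ^ n * (1 - γ)))
              + (lam ^ (n+1) - t * γ ^ (n+1)) = c + (lam ^ n - t * γ ^ n) := by ring
          linarith [hsc, e.ge]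
  apply Set.Subset.antisymm
  · rintro _ ⟨z, hz, rfl⟩
    obtain ⟨hx0, hx1, hy0, hy1⟩ := hsq z hz
    have ha : t * z.2 ≤ 0 := mul_nonpos_of_nonpos_of_nonneg ht hy0
    have hb : t * 1 ≤ t * z.2 := mul_le_mul_of_nonpos_left hy1 ht
    constructor
    · show 0 ≤ z.1 - t * z.2
      linarith
    · show z.1 - t * z.2 ≤ 1 - t
      linarith
  · intro s hs
    obtain ⟨hs0, hs1⟩ := hs
    have hcont : Continuous (fun q : ℝ × ℝ => q.1 - t * q.2) :=
      continuous_fst.sub (continuous_const.mul continuous_snd)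
    have hclosed : IsClosed ((fun q : ℝ × ℝ => q.1 - t * q.2) '' Z) :=
      (hZc.image hcont).isClosed
    rw [← hclosed.closure_eq]
    apply Metric.mem_closure_iff.mpr
    intro ε hε
    have h1t : (0:ℝ) < 1 - t := by linarith
    obtain ⟨n, hn⟩ := exists_pow_lt_of_lt_one (div_pos hε h1t) h4
    obtain ⟨c, g, hc0, hgZ, hgP, hcs, hsc⟩ := key s hs0 hs1 n
    obtain ⟨w, hw⟩ := hZne
    refine ⟨(g w).1 - t * (g w).2, ⟨g w, hgZ w hw, rfl⟩, ?_⟩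
    obtain ⟨hx0, hx1, hy0, hy1⟩ := hsq w hw
    have hP := hgP w
    have hgp : (0:ℝ) < γ ^ n := pow_pos h1 n
    have hglel : γ ^ n ≤ lam ^ n := pow_le_pow_left₀ (le_of_lt h1) (le_of_lt hgl) n
    have hlam_small : lam ^ n < ε / (1 - t) := hn
    have hlen : lam ^ n - t * γ ^ n < ε := by
      rw [lt_div_iff₀ h1t] at hlam_small
      nlinarith [hglel, hlam_small]
    -- bound |s - P(g w)|
    have hlp : (0:ℝ) < lam ^ n := pow_pos hlam0 n
    have hPin1 : c ≤ (g w).1 - t * (g w).2 := by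
      rw [hP]
      have ha : 0 ≤ lam ^ n * w.1 := mul_nonneg hlp.le hx0
      have hb : t * (γ ^ n * w.2) ≤ 0 :=
        mul_nonpos_of_nonpos_of_nonneg ht (mul_nonneg hgp.le hy0)
      linarith
    have hPin2 : (g w).1 - t * (g w).2 ≤ c + (lam ^ n - t * γ ^ n) := by
      rw [hP]
      have ha : lam ^ n * w.1 ≤ lam ^ n := mul_le_of_le_one_right hlp.le hx1
      have hb : t * γ ^ n ≤ t * (γ ^ n * w.2) :=
        mul_le_mul_of_nonpos_left (mul_le_of_le_one_right hgp.le hy1) ht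
      linarith
    rw [Real.dist_eq, abs_lt]
    constructor
    · linarith
    · linarith
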